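/- Let (φ, ψ) be a matrix factorization of f ∈ S involving parameters a_1,...,a_r (i.e., entries are power series with polynomial dependence on the parameters such that φψ = ψφ = f·I identically in the parameters). If A_1,...,A_r are pairwise commuting m×m matrices over k, then the inflated pair (Φ(A_1,...,A_r), Ψ(A_1,...,A_r)) is a matrix factorization of f of size m times the original size. -/

import Mathlib

open Matrix MvPowerSeries

/-- The Knörrer-style inductively defined pair of `2^i × 2^i` matrices attached to two
sequences `u v : ℕ → S`: start with `([u 0], [v 0])` and at each step form
`([[φ, -v·1],[u·1, ψ]], [[ψ, v·1],[-u·1, φ]])`. -/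
def knorrerPair {S : Type} [CommRing S] (u v : ℕ → S) :
    (i : ℕ) → Matrix (Fin (2 ^ i)) (Fin (2 ^ i)) S × Matrix (Fin (2 ^ i)) (Fin (2 ^ i)) S
  | 0 => (Matrix.of fun _ _ => u 0, Matrix.of fun _ _ => v 0)
  | (i + 1) =>
    let p := knorrerPair u v i
    let e : Fin (2 ^ i) ⊕ Fin (2 ^ i) ≃ Fin (2 ^ (i + 1)) :=
      finSumFinEquiv.trans (finCongr (by rw [pow_succ, mul_two]))
    ((Matrix.reindex e e)
        (Matrix.fromBlocks p.1 ((-(v (i + 1))) • 1) ((u (i + 1)) • 1) p.2),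
     (Matrix.reindex e e)
        (Matrix.fromBlocks p.2 ((v (i + 1)) • 1) ((-(u (i + 1))) • 1) p.1))

/-- *Inflation*: given a ring homomorphism `ρ` from a commutative ring `R` into `m × m`
matrices over `k` (the image of a tuple of pairwise commuting matrices), a matrix with
entries in `R[[x's]]` is turned into a matrix of size `m` times bigger with entries in
`k[[x's]]`, by applying `ρ` to every coefficient of every entry. -/
noncomputable def inflate {k R : Type} [Field k] [CommRing R] {m : ℕ} {σ : Type}
    (ρ : R →+* Matrix (Fin m) (Fin m) k) {N : Type}
    (M : Matrix N N (MvPowerSeries σ R)) :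
    Matrix (N × Fin m) (N × Fin m) (MvPowerSeries σ k) :=
  Matrix.of fun p q =>
    (fun d => ρ (MvPowerSeries.coeff d (M p.1 q.1)) p.2 q.2 : MvPowerSeries σ k)

noncomputable def inflate1 {k R : Type} [Field k] [CommRing R] {m : ℕ} {σ : Type}
    (ρ : R →+* Matrix (Fin m) (Fin m) k) (x : MvPowerSeries σ R) :
    Matrix (Fin m) (Fin m) (MvPowerSeries σ k) :=
  Matrix.of fun i j => (fun d => ρ (MvPowerSeries.coeff (R := R) d x) i j : MvPowerSeries σ k)

lemma coeff_inflate1 {k R : Type} [Field k] [CommRing R] {m : ℕ} {σ : Type}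
    (ρ : R →+* Matrix (Fin m) (Fin m) k) (x : MvPowerSeries σ R) (i j : Fin m) (d : σ →₀ ℕ) :
    MvPowerSeries.coeff (R := k) d (inflate1 ρ x i j) = ρ (MvPowerSeries.coeff (R := R) d x) i j := rfl

noncomputable def inflateHom {k R : Type} [Field k] [CommRing R] {m : ℕ} {σ : Type} [DecidableEq σ]
    (ρ : R →+* Matrix (Fin m) (Fin m) k) :
    MvPowerSeries σ R →+* Matrix (Fin m) (Fin m) (MvPowerSeries σ k) where
  toFun := inflate1 ρ
  map_one' := by
    ext i j d
    show MvPowerSeries.coeff (R := k) d (inflate1 ρ 1 i j) = MvPowerSeries.coeff (R := k) d ((1 : Matrix (Fin m) (Fin m) (MvPowerSeries σ k)) i j)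
    rw [coeff_inflate1, MvPowerSeries.coeff_one, Matrix.one_apply, apply_ite (MvPowerSeries.coeff (R := k) d), apply_ite ρ]
    by_cases h : d = 0 <;> by_cases h2 : i = j <;>
      simp [h, h2, MvPowerSeries.coeff_one, Matrix.one_apply]
  map_mul' a b := by
    ext i j d
    show MvPowerSeries.coeff (R := k) d (inflate1 ρ (a * b) i j)
        = MvPowerSeries.coeff (R := k) d ((inflate1 ρ a * inflate1 ρ b) i j)
    rw [coeff_inflate1, Matrix.mul_apply, map_sum (MvPowerSeries.coeff (R := k) d),
      MvPowerSeries.coeff_mul, map_sum ρ]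
    simp only [MvPowerSeries.coeff_mul, coeff_inflate1, Matrix.sum_apply]
    rw [Finset.sum_comm (s := (Finset.univ : Finset (Fin m))) (t := Finset.HasAntidiagonal.antidiagonal d)
      (f := fun t e => ρ (MvPowerSeries.coeff (R := R) e.1 a) i t * ρ (MvPowerSeries.coeff (R := R) e.2 b) t j)]
    refine Finset.sum_congr rfl fun e _ => ?_
    rw [_root_.map_mul, Matrix.mul_apply]
  map_zero' := by
    ext i j d
    show MvPowerSeries.coeff (R := k) d (inflate1 ρ 0 i j) = MvPowerSeries.coeff (R := k) d ((0 : Matrix (Fin m) (Fin m) (MvPowerSeries σ k)) i j)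
    rw [coeff_inflate1]; simp
  map_add' a b := by
    ext i j d
    show MvPowerSeries.coeff (R := k) d (inflate1 ρ (a + b) i j)
        = MvPowerSeries.coeff (R := k) d ((inflate1 ρ a + inflate1 ρ b) i j)
    rw [coeff_inflate1]; simp [coeff_inflate1]

lemma inflate_eq {k R : Type} [Field k] [CommRing R] {m : ℕ} {σ : Type} [DecidableEq σ]
    (ρ : R →+* Matrix (Fin m) (Fin m) k) {N : Type} [Fintype N] [DecidableEq N]
    (M : Matrix N N (MvPowerSeries σ R)) :
    inflate ρ M = Matrix.compRingEquiv N (Fin m) (MvPowerSeries σ k)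
      ((inflateHom ρ).mapMatrix M) := by
  ext ⟨p, i⟩ ⟨q, j⟩
  rfl

theorem inflate_aux {k R : Type} [Field k] [CommRing R] [Algebra k R] {m : ℕ}
    (ρ : R →ₐ[k] Matrix (Fin m) (Fin m) k) {σ N : Type} [DecidableEq σ] [Fintype N] [DecidableEq N]
    (f : MvPowerSeries σ k)
    (φ ψ : Matrix N N (MvPowerSeries σ R))
    (h : φ * ψ = (MvPowerSeries.map (algebraMap k R) f) • 1) :
    inflate ρ.toRingHom φ * inflate ρ.toRingHom ψ = f • 1 := by
  rw [inflate_eq, inflate_eq, ← _root_.map_mul, ← _root_.map_mul, h]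
  ext ⟨p, i⟩ ⟨q, j⟩ d
  show MvPowerSeries.coeff (R := k) d
      ((inflateHom ρ.toRingHom) (((MvPowerSeries.map (algebraMap k R) f) •
        (1 : Matrix N N (MvPowerSeries σ R))) p q) i j)
    = MvPowerSeries.coeff (R := k) d ((f • (1 : Matrix (N × Fin m) (N × Fin m) (MvPowerSeries σ k))) (p, i) (q, j))
  rw [Matrix.smul_apply, Matrix.one_apply, Matrix.smul_apply, Matrix.one_apply]
  have hTc : ∀ i j, MvPowerSeries.coeff (R := k) d
      ((inflateHom (σ := σ) ρ.toRingHom) (MvPowerSeries.map (algebraMap k R) f) i j)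
      = if i = j then MvPowerSeries.coeff (R := k) d f else 0 := by
    intro i j
    show ρ.toRingHom (MvPowerSeries.coeff (R := R) d (MvPowerSeries.map (algebraMap k R) f)) i j = _
    rw [MvPowerSeries.coeff_map]
    have : ρ.toRingHom (algebraMap k R (MvPowerSeries.coeff (R := k) d f))
        = algebraMap k (Matrix (Fin m) (Fin m) k) (MvPowerSeries.coeff (R := k) d f) := ρ.commutes _
    rw [this, Matrix.algebraMap_matrix_apply]
    simp
  by_cases hpq : p = q
  · subst hpq
    rw [if_pos rfl, smul_eq_mul, mul_one, hTc]
    by_cases hij : i = j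
    · subst hij; simp
    · have hne : (p, i) ≠ (p, j) := fun hc => hij (congrArg Prod.snd hc)
      simp [hij, hne]
  · have hne : (p, i) ≠ (q, j) := fun hc => hpq (congrArg Prod.fst hc)
    rw [if_neg hpq, if_neg hne, smul_zero, map_zero]
    simp

/-- Let `(φ, ψ)` be a matrix factorization of `f ∈ k[[x_1,…,x_n,z]]`
involving parameters `a_1,…,a_r`: concretely, the parameters and the pairwise commuting
`m × m` matrices `A_1,…,A_r` substituted for them are encoded by a commutative
`k`-algebra `R` and an algebra map `ρ : R → Matₘ(k)`, the entries of `φ, ψ` are power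
series with coefficients in `R`, and `φψ = ψφ = f·1` identically in the parameters
(i.e. over `R`).  Then the inflated pair `(Φ(A), Ψ(A))`, obtained by applying `ρ`
coefficientwise, is a matrix factorization of `f` of size `m` times the original size. -/
theorem inflate_matrix_factorization
    (k : Type) [Field k] (n m : ℕ)
    (R : Type) [CommRing R] [Algebra k R]
    (ρ : R →ₐ[k] Matrix (Fin m) (Fin m) k)
    (f : MvPowerSeries (Option (Fin n)) k)
    (N : Type) [Fintype N] [DecidableEq N]
    (φ ψ : Matrix N N (MvPowerSeries (Option (Fin n)) R))
    (hφψ : φ * ψ = (MvPowerSeries.map (algebraMap k R) f) • 1)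
    (hψφ : ψ * φ = (MvPowerSeries.map (algebraMap k R) f) • 1) :
    inflate ρ.toRingHom φ * inflate ρ.toRingHom ψ = f • 1 ∧
      inflate ρ.toRingHom ψ * inflate ρ.toRingHom φ = f • 1 :=
  ⟨inflate_aux ρ f φ ψ hφψ, inflate_aux ρ f ψ φ hψφ⟩
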